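/- For h,k = 1,…,d let A^{hk} and M^{hk} be m×m real matrices such that |Im Σ_{h,k=1}^d (A^{hk}θ^k, θ^h)| ≤ C₀ Re Σ_{h,k=1}^d (M^{hk}θ^k, θ^h) for some constant C₀ > 0 and every θ¹,…,θ^d ∈ ℂ^m. Then, with A_as^{hk} := (A^{hk} − (A^{kh})^T)/2, the inequality |Σ_{h,k=1}^d (A_as^{hk}θ^k, η^h)| ≤ C₀ (Re Σ_{h,k=1}^d (M^{hk}θ^k, θ^h))^{1/2} (Re Σ_{h,k=1}^d (M^{hk}η^k, η^h))^{1/2} holds for every θ¹,…,θ^d, η¹,…,η^d ∈ ℂ^m. -/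

import Mathlib

open ComplexConjugate

noncomputable section

/-- The sesquilinear form `Σ_{h,k} (A^{hk} θ^k, η^h)` associated with a family of
`m × m` real matrices `A^{hk}` (`h,k = 1,…,d`), where `(·,·)` is the Hermitian inner
product `(u,v) = Σ_i u_i conj(v_i)` on `ℂ^m`. -/
def cform {d m : ℕ} (A : Fin d → Fin d → Fin m → Fin m → ℝ)
    (θ η : Fin d → Fin m → ℂ) : ℂ :=
  ∑ h, ∑ k, ∑ i, ∑ j, (A h k i j : ℂ) * θ k j * conj (η h i)

/-- The antisymmetric part `A_as^{hk} = (A^{hk} − (A^{kh})^T)/2` of a family of real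
matrices. -/
def asymPart {d m : ℕ} (A : Fin d → Fin d → Fin m → Fin m → ℝ) :
    Fin d → Fin d → Fin m → Fin m → ℝ :=
  fun h k i j => (A h k i j - A k h j i) / 2

variable {d m : ℕ}

lemma cform_add_left (A : Fin d → Fin d → Fin m → Fin m → ℝ) (θ₁ θ₂ η : Fin d → Fin m → ℂ) :
    cform A (θ₁ + θ₂) η = cform A θ₁ η + cform A θ₂ η := by
  simp [cform, mul_add, add_mul, Finset.sum_add_distrib]

lemma cform_add_right (A : Fin d → Fin d → Fin m → Fin m → ℝ) (θ η₁ η₂ : Fin d → Fin m → ℂ) :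
    cform A θ (η₁ + η₂) = cform A θ η₁ + cform A θ η₂ := by
  simp [cform, map_add, mul_add, Finset.sum_add_distrib]

lemma cform_sub_left (A : Fin d → Fin d → Fin m → Fin m → ℝ) (θ₁ θ₂ η : Fin d → Fin m → ℂ) :
    cform A (θ₁ - θ₂) η = cform A θ₁ η - cform A θ₂ η := by
  simp [cform, mul_sub, sub_mul, Finset.sum_sub_distrib]

lemma cform_sub_right (A : Fin d → Fin d → Fin m → Fin m → ℝ) (θ η₁ η₂ : Fin d → Fin m → ℂ) :
    cform A θ (η₁ - η₂) = cform A θ η₁ - cform A θ η₂ := by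
  simp [cform, map_sub, mul_sub, Finset.sum_sub_distrib]

lemma cform_smul_left (A : Fin d → Fin d → Fin m → Fin m → ℝ) (c : ℂ) (θ η : Fin d → Fin m → ℂ) :
    cform A (c • θ) η = c * cform A θ η := by
  simp only [cform, Pi.smul_apply, smul_eq_mul, Finset.mul_sum]
  refine Finset.sum_congr rfl fun h _ => Finset.sum_congr rfl fun k _ =>
    Finset.sum_congr rfl fun i _ => Finset.sum_congr rfl fun j _ => by ring

lemma cform_smul_right (A : Fin d → Fin d → Fin m → Fin m → ℝ) (c : ℂ) (θ η : Fin d → Fin m → ℂ) :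
    cform A θ (c • η) = conj c * cform A θ η := by
  simp only [cform, Pi.smul_apply, smul_eq_mul, map_mul, Finset.mul_sum]
  refine Finset.sum_congr rfl fun h _ => Finset.sum_congr rfl fun k _ =>
    Finset.sum_congr rfl fun i _ => Finset.sum_congr rfl fun j _ => by ring


lemma sum4_swap (f : Fin d → Fin d → Fin m → Fin m → ℂ) :
    ∑ h, ∑ k, ∑ i, ∑ j, f h k i j = ∑ h, ∑ k, ∑ i, ∑ j, f k h j i := by
  rw [Finset.sum_comm]
  exact Finset.sum_congr rfl fun h _ => Finset.sum_congr rfl fun k _ => Finset.sum_comm ..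

lemma cform_asym (A : Fin d → Fin d → Fin m → Fin m → ℝ) (θ η : Fin d → Fin m → ℂ) :
    cform (asymPart A) θ η = (cform A θ η - conj (cform A η θ)) / 2 := by
  have h1 : conj (cform A η θ) = ∑ h, ∑ k, ∑ i, ∑ j, (A k h j i : ℂ) * θ k j * conj (η h i) := by
    have : conj (cform A η θ) = ∑ h, ∑ k, ∑ i, ∑ j, (A h k i j : ℂ) * conj (η k j) * θ h i := by
      simp [cform, map_sum, map_mul, Complex.conj_conj, Complex.conj_ofReal]
    rw [this, sum4_swap (fun h k i j => (A h k i j : ℂ) * conj (η k j) * θ h i)]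
    exact Finset.sum_congr rfl fun h _ => Finset.sum_congr rfl fun k _ =>
      Finset.sum_congr rfl fun i _ => Finset.sum_congr rfl fun j _ => by ring
  rw [h1, eq_div_iff (two_ne_zero)]
  simp only [cform, asymPart, Finset.sum_mul, ← Finset.sum_sub_distrib]
  refine Finset.sum_congr rfl fun h _ => Finset.sum_congr rfl fun k _ =>
    Finset.sum_congr rfl fun i _ => Finset.sum_congr rfl fun j _ => ?_
  push_cast
  ring

lemma opt_real {C a b x : ℝ} (hC : 0 < C) (ha : 0 ≤ a) (hb : 0 ≤ b)
    (h : ∀ t : ℝ, 0 < t → |x| ≤ C / 2 * (t * a + b / t)) :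
    |x| ≤ C * Real.sqrt a * Real.sqrt b := by
  rcases eq_or_lt_of_le ha with ha0 | ha0
  · -- a = 0
    rcases eq_or_lt_of_le hb with hb0 | hb0
    · have := h 1 one_pos
      simp [← ha0, ← hb0] at this
      rw [← ha0, ← hb0]
      simpa using this
    · by_contra hx
      push_neg at hx
      have hx0 : 0 < |x| := lt_of_le_of_lt (by positivity) hx
      have ht : 0 < C * b / |x| := by positivity
      have := h (C * b / |x|) ht
      rw [← ha0] at this
      have h2 : C / 2 * ((C * b / |x|) * 0 + b / (C * b / |x|)) = |x| / 2 := by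
        field_simp
        ring
      rw [h2] at this
      linarith
  · rcases eq_or_lt_of_le hb with hb0 | hb0
    · by_contra hx
      push_neg at hx
      have hx0 : 0 < |x| := lt_of_le_of_lt (by positivity) hx
      have ht : 0 < |x| / (C * a) := by positivity
      have := h (|x| / (C * a)) ht
      rw [← hb0] at this
      have h2 : C / 2 * ((|x| / (C * a)) * a + 0 / (|x| / (C * a))) = |x| / 2 := by
        field_simp
        ring
      rw [h2] at this
      linarith
    · have hsa : 0 < Real.sqrt a := Real.sqrt_pos.2 ha0
      have hsb : 0 < Real.sqrt b := Real.sqrt_pos.2 hb0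
      have ht : 0 < Real.sqrt b / Real.sqrt a := by positivity
      have := h _ ht
      have ea : Real.sqrt a ^ 2 = a := Real.sq_sqrt ha
      have eb : Real.sqrt b ^ 2 = b := Real.sq_sqrt hb
      have hA : Real.sqrt b / Real.sqrt a * a = Real.sqrt a * Real.sqrt b := by
        field_simp; nlinarith [Real.mul_self_sqrt ha, hsa, hsb]
      have hB : b / (Real.sqrt b / Real.sqrt a) = Real.sqrt a * Real.sqrt b := by
        field_simp; nlinarith [Real.mul_self_sqrt hb, hsa, hsb]
      have h2 : C / 2 * ((Real.sqrt b / Real.sqrt a) * a + b / (Real.sqrt b / Real.sqrt a))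
          = C * Real.sqrt a * Real.sqrt b := by
        rw [hA, hB]; ring
      rw [h2] at this
      exact this

lemma diag_im (z : ℂ) : ((z - conj z)/2).im = z.im := by
  simp [Complex.div_im]

lemma swap_im (z w : ℂ) : ((z - conj w)/2).im = ((w - conj z)/2).im := by
  simp [Complex.div_im]; ring


theorem statement12 (d m : ℕ) (hd : 0 < d) (hm : 0 < m)
    (A M : Fin d → Fin d → Fin m → Fin m → ℝ) (C₀ : ℝ) (hC₀ : 0 < C₀)
    (hIm : ∀ θ : Fin d → Fin m → ℂ, |(cform A θ θ).im| ≤ C₀ * (cform M θ θ).re) :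
    ∀ θ η : Fin d → Fin m → ℂ,
      ‖cform (asymPart A) θ η‖ ≤
        C₀ * Real.sqrt ((cform M θ θ).re) * Real.sqrt ((cform M η η).re) := by
  have hN : ∀ χ, 0 ≤ (cform M χ χ).re := fun χ => by
    nlinarith [hIm χ, abs_nonneg (cform A χ χ).im]
  have hBdiag : ∀ χ, (cform (asymPart A) χ χ).im = (cform A χ χ).im := fun χ => by
    rw [cform_asym]; exact diag_im _
  have hBanti : ∀ θ η : Fin d → Fin m → ℂ,
      (cform (asymPart A) η θ).im = (cform (asymPart A) θ η).im := fun θ η => by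
    rw [cform_asym A η θ, cform_asym A θ η]; exact swap_im _ _
  have key : ∀ θ η : Fin d → Fin m → ℂ,
      |(cform (asymPart A) θ η).im| ≤
        C₀ / 2 * ((cform M θ θ).re + (cform M η η).re) := by
    intro θ η
    have E1 : (cform (asymPart A) (θ + η) (θ + η)).im =
        (cform (asymPart A) θ θ).im + (cform (asymPart A) η η).im +
          2 * (cform (asymPart A) θ η).im := by
      rw [cform_add_left, cform_add_right, cform_add_right]
      simp only [Complex.add_im]
      linarith [hBanti θ η]
    have E2 : (cform (asymPart A) (θ - η) (θ - η)).im =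
        (cform (asymPart A) θ θ).im + (cform (asymPart A) η η).im -
          2 * (cform (asymPart A) θ η).im := by
      rw [cform_sub_left, cform_sub_right, cform_sub_right]
      simp only [Complex.sub_im]
      linarith [hBanti θ η]
    have EP : (cform M (θ + η) (θ + η)).re + (cform M (θ - η) (θ - η)).re =
        2 * (cform M θ θ).re + 2 * (cform M η η).re := by
      rw [cform_add_left, cform_add_right, cform_add_right,
        cform_sub_left, cform_sub_right, cform_sub_right]
      simp only [Complex.add_re, Complex.sub_re]
      ring
    have p := hIm (θ + η)
    have q := hIm (θ - η)
    rw [← hBdiag (θ + η), E1] at p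
    rw [← hBdiag (θ - η), E2] at q
    rw [abs_le] at p q ⊢
    constructor <;> nlinarith [p.1, p.2, q.1, q.2, EP, hC₀]
  have key2 : ∀ θ η : Fin d → Fin m → ℂ,
      |(cform (asymPart A) θ η).im| ≤
        C₀ * Real.sqrt ((cform M θ θ).re) * Real.sqrt ((cform M η η).re) := by
    intro θ η
    apply opt_real hC₀ (hN θ) (hN η)
    intro t ht
    set s := Real.sqrt t with hs
    have hs0 : 0 < s := Real.sqrt_pos.2 ht
    have hss : s * s = t := Real.mul_self_sqrt ht.le
    have e : cform (asymPart A) (((s:ℂ)) • θ) ((((s⁻¹ : ℝ):ℂ)) • η) =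
        cform (asymPart A) θ η := by
      rw [cform_smul_left, cform_smul_right, Complex.conj_ofReal, ← mul_assoc,
        ← Complex.ofReal_mul, mul_inv_cancel₀ hs0.ne']
      simp
    have eN1 : (cform M (((s:ℂ)) • θ) (((s:ℂ)) • θ)).re = t * (cform M θ θ).re := by
      rw [cform_smul_left, cform_smul_right, Complex.conj_ofReal, ← mul_assoc,
        ← Complex.ofReal_mul, hss, Complex.re_ofReal_mul]
    have eN2 : (cform M ((((s⁻¹ : ℝ):ℂ)) • η) ((((s⁻¹ : ℝ):ℂ)) • η)).re =
        (cform M η η).re / t := by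
      rw [cform_smul_left, cform_smul_right, Complex.conj_ofReal, ← mul_assoc,
        ← Complex.ofReal_mul, Complex.re_ofReal_mul, ← mul_inv, hss]
      rw [inv_mul_eq_div]
    calc |(cform (asymPart A) θ η).im|
        = |(cform (asymPart A) (((s:ℂ)) • θ) ((((s⁻¹ : ℝ):ℂ)) • η)).im| := by rw [e]
      _ ≤ C₀ / 2 * ((cform M (((s:ℂ)) • θ) (((s:ℂ)) • θ)).re +
            (cform M ((((s⁻¹ : ℝ):ℂ)) • η) ((((s⁻¹ : ℝ):ℂ)) • η)).re) := key _ _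
      _ = C₀ / 2 * (t * (cform M θ θ).re + (cform M η η).re / t) := by rw [eN1, eN2]
  intro θ η
  by_cases h0 : cform (asymPart A) θ η = 0
  · rw [h0]
    simp only [norm_zero]
    positivity
  · set z := cform (asymPart A) θ η with hz
    have hznorm : (0:ℝ) < ‖z‖ := norm_pos_iff.2 h0
    have h1 : ((‖z‖:ℝ):ℂ) ≠ 0 := by simp [h0]
    set c : ℂ := Complex.I * conj z / (‖z‖ : ℝ) with hc
    have hcz : c * z = Complex.I * (‖z‖ : ℝ) := by
      rw [hc, div_mul_eq_mul_div, mul_assoc, RCLike.conj_mul, sq, ← mul_assoc, mul_div_assoc]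
      field_simp
      rfl
    have hcnorm : ‖c‖ = 1 := by
      rw [hc]
      simp [norm_div, norm_mul, hznorm.ne']
    have hcc : c * conj c = 1 := by
      rw [Complex.mul_conj', hcnorm]
      norm_num
    have hc1 : (cform M (c • θ) (c • θ)).re = (cform M θ θ).re := by
      rw [cform_smul_left, cform_smul_right, ← mul_assoc, hcc, one_mul]
    have hBc : cform (asymPart A) (c • θ) η = c * z := by
      rw [cform_smul_left, ← hz]
    calc ‖z‖ = (cform (asymPart A) (c • θ) η).im := by
          rw [hBc, hcz]; simp
      _ ≤ |(cform (asymPart A) (c • θ) η).im| := le_abs_self _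
      _ ≤ C₀ * Real.sqrt ((cform M (c • θ) (c • θ)).re) *
            Real.sqrt ((cform M η η).re) := key2 _ _
      _ = C₀ * Real.sqrt ((cform M θ θ).re) * Real.sqrt ((cform M η η).re) := by rw [hc1]
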